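/- Let n ≥ 2 and let ρ : (0,∞) → (0,∞) be a strictly monotone C² function. Define h(x) = (x/|x|)·ρ(|x|) for x ∈ ℝⁿ \ {0}. Then there exist constants 0 < c(n) ≤ C(n) depending only on n such that for every x ≠ 0: c(n)·max{ |ρ''(|x|)|, |ρ(|x|)/|x|² − ρ'(|x|)/|x|| } ≤ |D²h(x)| ≤ C(n)·max{ |ρ''(|x|)|, |ρ(|x|)/|x|² − ρ'(|x|)/|x|| }. -/

import Mathlib

open MeasureTheory Metric Set Filter
open scoped ENNReal ContDiff NNReal Topology

noncomputable section

/-- `G` is a weak (distributional) derivative of `f` on the open set `Ω`: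
integration by parts against all smooth compactly supported test functions
whose support lies in `Ω`. -/
def HasWeakFDerivOn {n : ℕ} {F : Type*} [NormedAddCommGroup F] [NormedSpace ℝ F]
    (Ω : Set (EuclideanSpace ℝ (Fin n))) (f : EuclideanSpace ℝ (Fin n) → F)
    (G : EuclideanSpace ℝ (Fin n) → EuclideanSpace ℝ (Fin n) →L[ℝ] F) : Prop :=
  ∀ φ : EuclideanSpace ℝ (Fin n) → ℝ, ContDiff ℝ ∞ φ → HasCompactSupport φ →
    tsupport φ ⊆ Ω → ∀ v : EuclideanSpace ℝ (Fin n),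
      ∫ x in Ω, fderiv ℝ φ x v • f x = - ∫ x in Ω, φ x • G x v

/-- Membership in the Sobolev space `W^{1,b}(Ω)` for real-valued functions:
the function and its weak derivative belong to `L^b(Ω)`. -/
def MemW1 {n : ℕ} (b : ℝ) (Ω : Set (EuclideanSpace ℝ (Fin n)))
    (g : EuclideanSpace ℝ (Fin n) → ℝ) : Prop :=
  MemLp g (ENNReal.ofReal b) (volume.restrict Ω) ∧
  ∃ G, HasWeakFDerivOn Ω g G ∧ MemLp G (ENNReal.ofReal b) (volume.restrict Ω)

/-- Membership in the Sobolev space `W^{2,q}(Ω, ℝⁿ)`: the map and its weak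
derivatives of order one and two belong to `L^q(Ω)`. -/
def MemW2 {n : ℕ} (q : ℝ) (Ω : Set (EuclideanSpace ℝ (Fin n)))
    (f : EuclideanSpace ℝ (Fin n) → EuclideanSpace ℝ (Fin n)) : Prop :=
  MemLp f (ENNReal.ofReal q) (volume.restrict Ω) ∧
  ∃ G H, HasWeakFDerivOn Ω f G ∧ HasWeakFDerivOn Ω G H ∧
    MemLp G (ENNReal.ofReal q) (volume.restrict Ω) ∧
    MemLp H (ENNReal.ofReal q) (volume.restrict Ω)

/-- The set of points of `Ω` at which the precise (quasicontinuous)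
representative of `g` is defined and equals `0`, i.e. the points having
Lebesgue value `0`. -/
def zeroLebesgueSet {n : ℕ} (Ω : Set (EuclideanSpace ℝ (Fin n)))
    (g : EuclideanSpace ℝ (Fin n) → ℝ) : Set (EuclideanSpace ℝ (Fin n)) :=
  {x ∈ Ω | Tendsto (fun r : ℝ => ⨍ y in ball x r, |g y|) (𝓝[>] 0) (𝓝 0)}

/-- `|g|^{-a} ∈ L¹(Ω)` (stated with the `ℝ≥0∞`-valued integral, so that it in
particular forces `g ≠ 0` almost everywhere). -/
def InvPowIntegrableOn {n : ℕ} (Ω : Set (EuclideanSpace ℝ (Fin n)))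
    (g : EuclideanSpace ℝ (Fin n) → ℝ) (a : ℝ) : Prop :=
  ∫⁻ x in Ω, ((ENNReal.ofReal |g x|) ^ a)⁻¹ < ⊤

/-- `f` restricted to `s` is a homeomorphism of `s` onto its image. -/
def IsHomeoOnto {n : ℕ} (f : EuclideanSpace ℝ (Fin n) → EuclideanSpace ℝ (Fin n))
    (s : Set (EuclideanSpace ℝ (Fin n))) : Prop :=
  ∃ e : ↥s ≃ₜ ↥(f '' s), ∀ x : ↥s, (e x : EuclideanSpace ℝ (Fin n)) = f x

/-- A bounded Lipschitz domain: a bounded connected open set whose boundary is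
locally the region below the graph of a Lipschitz function (in a suitable
direction `u`). -/
def IsLipschitzDomain {n : ℕ} (Ω : Set (EuclideanSpace ℝ (Fin n))) : Prop :=
  IsOpen Ω ∧ IsConnected Ω ∧ Bornology.IsBounded Ω ∧
  ∀ x ∈ frontier Ω, ∃ r : ℝ, 0 < r ∧ ∃ u : EuclideanSpace ℝ (Fin n), ‖u‖ = 1 ∧
    ∃ (g : EuclideanSpace ℝ (Fin n) → ℝ) (L : ℝ≥0), LipschitzWith L g ∧
      Ω ∩ ball x r = {y ∈ ball x r | (inner ℝ y u : ℝ) < g (y - (inner ℝ y u : ℝ) • u)}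

open scoped RealInnerProductSpace

section Aux

variable {E : Type*} [NormedAddCommGroup E] [InnerProductSpace ℝ E]

lemma hasFDerivAt_norm' {x : E} (hx : x ≠ 0) :
    HasFDerivAt (fun y : E => ‖y‖) (‖x‖⁻¹ • innerSL ℝ x) x := by
  have hr : (0:ℝ) < ‖x‖ := norm_pos_iff.2 hx
  have h1 : HasFDerivAt (fun y : E => ‖y‖ ^ 2) (2 • innerSL ℝ x) x :=
    (hasStrictFDerivAt_norm_sq x).hasFDerivAt
  have h2 := (Real.hasDerivAt_sqrt (by positivity : (‖x‖^2 : ℝ) ≠ 0)).comp_hasFDerivAt x h1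
  have heq : (Real.sqrt ∘ fun y : E => ‖y‖ ^ 2) = fun y : E => ‖y‖ := by
    funext y; simp [Function.comp, Real.sqrt_sq (norm_nonneg y)]
  rw [heq] at h2
  refine h2.congr_fderiv ?_
  rw [Real.sqrt_sq hr.le]
  ext w
  simp [ContinuousLinearMap.smul_apply, two_smul]
  ring

/-- First derivative of the radial map. -/
def Fmap (ρ : ℝ → ℝ) (y : E) : E →L[ℝ] E :=
  (ρ ‖y‖ / ‖y‖) • ContinuousLinearMap.id ℝ E +
  ((deriv ρ ‖y‖ * ‖y‖ - ρ ‖y‖) / ‖y‖ ^ 2 * ‖y‖⁻¹) • ((innerSL ℝ y).smulRight y)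

lemma step1 (ρ : ℝ → ℝ) {y : E} (hy : y ≠ 0) (hρ : DifferentiableAt ℝ ρ ‖y‖) :
    HasFDerivAt (fun z : E => (ρ ‖z‖ / ‖z‖) • z) (Fmap ρ y) y := by
  have hr : (0:ℝ) < ‖y‖ := norm_pos_iff.2 hy
  have hs : HasDerivAt (fun t : ℝ => ρ t / t) ((deriv ρ ‖y‖ * ‖y‖ - ρ ‖y‖ * 1) / (‖y‖ ^ 2)) ‖y‖ :=
    hρ.hasDerivAt.div (hasDerivAt_id _) hr.ne'
  have hsc : HasFDerivAt (fun z : E => ρ ‖z‖ / ‖z‖)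
      (((deriv ρ ‖y‖ * ‖y‖ - ρ ‖y‖ * 1)/‖y‖^2) • (‖y‖⁻¹ • innerSL ℝ y)) y :=
    hs.comp_hasFDerivAt y (hasFDerivAt_norm' hy)
  have h := hsc.smul (hasFDerivAt_id y)
  refine h.congr_fderiv ?_
  ext w
  simp only [Fmap, ContinuousLinearMap.add_apply, ContinuousLinearMap.smul_apply,
    ContinuousLinearMap.smulRight_apply, ContinuousLinearMap.id_apply,
    innerSL_apply_apply, smul_smul, mul_one, id_eq, smul_eq_mul]

lemma step2 (ρ : ℝ → ℝ) {x : E} (hx : x ≠ 0)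
    (hρ : DifferentiableAt ℝ ρ ‖x‖) (hρ' : DifferentiableAt ℝ (deriv ρ) ‖x‖) :
    ∃ B : E →L[ℝ] E →L[ℝ] E, HasFDerivAt (Fmap ρ) B x ∧
      ∀ w v : E, B w v =
        ((-(ρ ‖x‖ / ‖x‖^2 - deriv ρ ‖x‖ / ‖x‖)/‖x‖) * ⟪x, w⟫) • v +
        ((-(ρ ‖x‖ / ‖x‖^2 - deriv ρ ‖x‖ / ‖x‖)/‖x‖) * ⟪x, v⟫) • w +
        ((-(ρ ‖x‖ / ‖x‖^2 - deriv ρ ‖x‖ / ‖x‖)/‖x‖) * ⟪w, v⟫ +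
          ((deriv (deriv ρ) ‖x‖ + 3*(ρ ‖x‖ / ‖x‖^2 - deriv ρ ‖x‖ / ‖x‖))/‖x‖^3) * ⟪x, w⟫ * ⟪x, v⟫) • x := by
  have hr : (0:ℝ) < ‖x‖ := norm_pos_iff.2 hx
  have hsrl : ∀ (a : E →L[ℝ] ℝ) (f : E), ContinuousLinearMap.smulRightL ℝ E E a f = a.smulRight f :=
    fun a f => rfl
  have hN := hasFDerivAt_norm' hx
  have hs := (hρ.hasDerivAt.div (hasDerivAt_id ‖x‖) hr.ne').comp_hasFDerivAt x hN
  have hpart1 := hs.smul (hasFDerivAt_const (ContinuousLinearMap.id ℝ E) x)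
  have hk0 := ((hρ'.hasDerivAt.mul (hasDerivAt_id ‖x‖)).sub hρ.hasDerivAt).div
      (hasDerivAt_pow 2 ‖x‖) (pow_ne_zero 2 hr.ne')
  have hk1 := hk0.mul (hasDerivAt_inv hr.ne')
  have hk := hk1.comp_hasFDerivAt x hN
  set c : E →L[ℝ] E →L[ℝ] E →L[ℝ] E :=
    (ContinuousLinearMap.smulRightL ℝ E E).comp (innerSL ℝ) with hc_def
  have hM : HasFDerivAt (fun y : E => (innerSL ℝ y).smulRight y)
      ((c x).comp (ContinuousLinearMap.id ℝ E) + c.flip x) x := by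
    have hM0 := (c.hasFDerivAt (x := x)).clm_apply (hasFDerivAt_id x)
    exact hM0
  have hpart2 := hk.smul hM
  have hB := hpart1.add hpart2
  refine ⟨_, (by exact hB : HasFDerivAt (Fmap ρ) _ x), fun w v => ?_⟩
  · simp only [hc_def, ContinuousLinearMap.add_apply, ContinuousLinearMap.smul_apply,
      ContinuousLinearMap.smulRight_apply, ContinuousLinearMap.comp_apply,
      ContinuousLinearMap.flip_apply, ContinuousLinearMap.id_apply, innerSL_apply_apply, hsrl,
      ContinuousLinearMap.zero_apply, smul_zero,
      zero_add, add_zero, smul_smul, smul_eq_mul, Function.comp, id_eq, mul_one,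
      Pi.mul_apply, Pi.div_apply, Pi.sub_apply]
    match_scalars <;> field_simp <;> ring

lemma exists_orth (n : ℕ) (hn : 2 ≤ n) (x : EuclideanSpace ℝ (Fin n)) (hx : x ≠ 0) :
    ∃ e : EuclideanSpace ℝ (Fin n), ‖e‖ = 1 ∧ ⟪x, e⟫ = 0 := by
  have hbot : (ℝ ∙ x)ᗮ ≠ ⊥ := by
    intro hb
    have htop : (ℝ ∙ x) = ⊤ := (Submodule.orthogonal_eq_bot_iff).1 hb
    have h1 : Module.finrank ℝ (ℝ ∙ x) = 1 := finrank_span_singleton hx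
    rw [htop] at h1
    have h2 : Module.finrank ℝ (⊤ : Submodule ℝ (EuclideanSpace ℝ (Fin n)))
        = Module.finrank ℝ (EuclideanSpace ℝ (Fin n)) := finrank_top ℝ _
    rw [h2, finrank_euclideanSpace_fin] at h1
    omega
  obtain ⟨b, hb, hb0⟩ := Submodule.exists_mem_ne_zero_of_ne_bot hbot
  refine ⟨‖b‖⁻¹ • b, ?_, ?_⟩
  · rw [norm_smul, norm_inv, norm_norm, inv_mul_cancel₀ (norm_ne_zero_iff.2 hb0)]
  · rw [real_inner_smul_right]
    have h0 := (Submodule.mem_orthogonal _ b).1 hb x (Submodule.mem_span_singleton_self x)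
    rw [h0, mul_zero]

end Aux

/-- The radial mapping `h(x) = (x/|x|) ρ(|x|)`. -/
def radialMap (n : ℕ) (ρ : ℝ → ℝ) (x : EuclideanSpace ℝ (Fin n)) :
    EuclideanSpace ℝ (Fin n) :=
  (ρ ‖x‖ / ‖x‖) • x

set_option maxHeartbeats 1000000 in
/-- for a strictly monotone `C²` function `ρ : (0,∞) → (0,∞)` and
the radial map `h(x) = (x/|x|) ρ(|x|)`, one has
`|D²h(x)| ≈ max{|ρ''(|x|)|, |ρ(|x|)/|x|² - ρ'(|x|)/|x||}` with constants
depending only on `n`. -/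
theorem radial_second_derivative (n : ℕ) (hn : 2 ≤ n) :
    ∃ c C : ℝ, 0 < c ∧ c ≤ C ∧
      ∀ ρ : ℝ → ℝ, (∀ t ∈ Ioi (0 : ℝ), 0 < ρ t) →
        (StrictMonoOn ρ (Ioi 0) ∨ StrictAntiOn ρ (Ioi 0)) →
        ContDiffOn ℝ 2 ρ (Ioi 0) →
        ∀ x : EuclideanSpace ℝ (Fin n), x ≠ 0 →
          c * max |deriv (deriv ρ) ‖x‖| |ρ ‖x‖ / ‖x‖ ^ 2 - deriv ρ ‖x‖ / ‖x‖|
              ≤ ‖fderiv ℝ (fderiv ℝ (radialMap n ρ)) x‖ ∧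
          ‖fderiv ℝ (fderiv ℝ (radialMap n ρ)) x‖
              ≤ C * max |deriv (deriv ρ) ‖x‖| |ρ ‖x‖ / ‖x‖ ^ 2 - deriv ρ ‖x‖ / ‖x‖| := by
  refine ⟨1, 7, one_pos, by norm_num, fun ρ _ _ hC2 x hx => ?_⟩
  have hr : (0:ℝ) < ‖x‖ := norm_pos_iff.2 hx
  -- differentiability of ρ and deriv ρ on (0, ∞)
  have hdiff : ∀ t : ℝ, 0 < t → DifferentiableAt ℝ ρ t := fun t ht =>
    (hC2.differentiableOn (by norm_num)).differentiableAt (Ioi_mem_nhds ht)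
  have hdiff' : DifferentiableAt ℝ (deriv ρ) ‖x‖ :=
    (((hC2.deriv_of_isOpen (m := 1) isOpen_Ioi (by norm_num)).differentiableOn
      one_ne_zero).differentiableAt (Ioi_mem_nhds hr))
  -- the second derivative
  obtain ⟨B, hB, hBeq⟩ := step2 ρ hx (hdiff _ hr) hdiff'
  have hev : fderiv ℝ (radialMap n ρ) =ᶠ[𝓝 x] Fmap ρ := by
    filter_upwards [isOpen_compl_singleton.mem_nhds (show x ∈ ({0}ᶜ : Set _) from hx)] with y hy
    exact (step1 ρ (show y ≠ 0 from hy) (hdiff _ (norm_pos_iff.2 hy))).fderiv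
  have h2nd : fderiv ℝ (fderiv ℝ (radialMap n ρ)) x = B := by
    rw [hev.fderiv_eq, hB.fderiv]
  rw [h2nd]
  set pa : ℝ := deriv (deriv ρ) ‖x‖ with hpa
  set pb : ℝ := ρ ‖x‖ / ‖x‖ ^ 2 - deriv ρ ‖x‖ / ‖x‖ with hpb
  set M0 : ℝ := max |pa| |pb| with hM0
  have hpaM : |pa| ≤ M0 := le_max_left _ _
  have hpbM : |pb| ≤ M0 := le_max_right _ _
  have hM0nn : 0 ≤ M0 := le_trans (abs_nonneg _) hpaM
  constructor
  · -- lower bound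
    rw [one_mul]
    have hBle : ∀ z : EuclideanSpace ℝ (Fin n), ‖z‖ = 1 → ‖B z z‖ ≤ ‖B‖ := by
      intro z hz
      calc ‖B z z‖ ≤ ‖B z‖ * ‖z‖ := (B z).le_opNorm z
        _ = ‖B z‖ := by rw [hz, mul_one]
        _ ≤ ‖B‖ * ‖z‖ := B.le_opNorm z
        _ = ‖B‖ := by rw [hz, mul_one]
    refine max_le ?_ ?_
    · -- |pa| ≤ ‖B‖ via u = x/‖x‖
      set u : EuclideanSpace ℝ (Fin n) := ‖x‖⁻¹ • x with hu_def
      have hu : ‖u‖ = 1 := by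
        rw [hu_def, norm_smul, norm_inv, norm_norm, inv_mul_cancel₀ hr.ne']
      have hBuu : B u u = pa • u := by
        rw [hBeq u u, hu_def]
        simp only [real_inner_smul_right, real_inner_smul_left, real_inner_self_eq_norm_sq,
          norm_smul, Real.norm_eq_abs, abs_inv, abs_norm]
        match_scalars <;> field_simp <;> ring
      have : ‖B u u‖ = |pa| := by
        rw [hBuu, norm_smul, hu, mul_one, Real.norm_eq_abs]
      rw [← this]; exact hBle u hu
    · -- |pb| ≤ ‖B‖ via a unit vector orthogonal to x
      obtain ⟨e, he1, hxe⟩ := exists_orth n hn x hx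
      have hee : ⟪e, e⟫ = (1:ℝ) := by
        rw [real_inner_self_eq_norm_sq, he1]; norm_num
      have hBee : B e e = (-pb/‖x‖) • x := by
        rw [hBeq e e, hxe, hee]
        simp
      have : ‖B e e‖ = |pb| := by
        rw [hBee, norm_smul, Real.norm_eq_abs, abs_div, abs_neg, abs_of_pos hr]
        field_simp
      rw [← this]; exact hBle e he1
  · -- upper bound
    refine B.opNorm_le_bound (by positivity) (fun w => ?_)
    refine (B w).opNorm_le_bound (by positivity) (fun v => ?_)
    rw [hBeq w v]
    set c1 : ℝ := -pb/‖x‖ with hc1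
    set c3 : ℝ := (pa + 3*pb)/‖x‖^3 with hc3
    have habs1 : |c1| * ‖x‖ = |pb| := by
      rw [hc1, abs_div, abs_neg, abs_of_pos hr, div_mul_cancel₀ _ hr.ne']
    have habs3 : |c3| * ‖x‖^3 ≤ |pa| + 3*|pb| := by
      rw [hc3, abs_div, abs_of_pos (by positivity : (0:ℝ) < ‖x‖^3),
        div_mul_cancel₀ _ (by positivity : (‖x‖:ℝ)^3 ≠ 0)]
      calc |pa + 3*pb| ≤ |pa| + |3*pb| := abs_add_le _ _
        _ = |pa| + 3*|pb| := by rw [abs_mul]; norm_num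
    have hxw := abs_real_inner_le_norm x w
    have hxv := abs_real_inner_le_norm x v
    have hwv := abs_real_inner_le_norm w v
    have n1 : ‖(c1 * ⟪x, w⟫) • v‖ ≤ |c1| * (‖x‖ * ‖w‖) * ‖v‖ := by
      rw [norm_smul, Real.norm_eq_abs, abs_mul]
      gcongr
    have n2 : ‖(c1 * ⟪x, v⟫) • w‖ ≤ |c1| * (‖x‖ * ‖v‖) * ‖w‖ := by
      rw [norm_smul, Real.norm_eq_abs, abs_mul]
      gcongr
    have n3 : ‖(c1 * ⟪w, v⟫ + c3 * ⟪x, w⟫ * ⟪x, v⟫) • x‖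
        ≤ (|c1| * (‖w‖ * ‖v‖) + |c3| * (‖x‖ * ‖w‖) * (‖x‖ * ‖v‖)) * ‖x‖ := by
      rw [norm_smul, Real.norm_eq_abs]
      refine mul_le_mul_of_nonneg_right ?_ (norm_nonneg x)
      refine (abs_add_le _ _).trans ?_
      gcongr
      · rw [abs_mul]; gcongr
      · rw [abs_mul, abs_mul]; gcongr
    calc ‖(c1 * ⟪x, w⟫) • v + (c1 * ⟪x, v⟫) • w
          + (c1 * ⟪w, v⟫ + c3 * ⟪x, w⟫ * ⟪x, v⟫) • x‖
        ≤ ‖(c1 * ⟪x, w⟫) • v‖ + ‖(c1 * ⟪x, v⟫) • w‖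
          + ‖(c1 * ⟪w, v⟫ + c3 * ⟪x, w⟫ * ⟪x, v⟫) • x‖ := norm_add₃_le
      _ ≤ |c1| * (‖x‖ * ‖w‖) * ‖v‖ + |c1| * (‖x‖ * ‖v‖) * ‖w‖
          + (|c1| * (‖w‖ * ‖v‖) + |c3| * (‖x‖ * ‖w‖) * (‖x‖ * ‖v‖)) * ‖x‖ := by
            linarith
      _ ≤ 7 * M0 * ‖w‖ * ‖v‖ := by
            have e1 : |c1| * ‖x‖ * (‖w‖ * ‖v‖) = |pb| * (‖w‖ * ‖v‖) := by rw [habs1]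
            have e3 : |c3| * ‖x‖^3 * (‖w‖ * ‖v‖) ≤ (|pa| + 3*|pb|) * (‖w‖ * ‖v‖) :=
              mul_le_mul_of_nonneg_right habs3 (by positivity)
            have hbm : |pb| * (‖w‖ * ‖v‖) ≤ M0 * (‖w‖ * ‖v‖) :=
              mul_le_mul_of_nonneg_right hpbM (by positivity)
            have ham : (|pa| + 3*|pb|) * (‖w‖ * ‖v‖) ≤ 4 * M0 * (‖w‖ * ‖v‖) := by
              have : |pa| + 3*|pb| ≤ 4 * M0 := by linarith
              exact mul_le_mul_of_nonneg_right this (by positivity)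
            nlinarith [e1, e3, hbm, ham]
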